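/- arXiv:1605.03411 — 4 statements merged into one kernel-verified Lean document; each statement's English description precedes it below -/
import Mathlib

section
/- Let Λ be a lattice in an LCA group G and Ω a measurable set with finite positive measure. If (Ω, Λ) is a sub-tiling pair, then there exists a measurable cross section Q of G/Λ such that Ω ⊆ Q up to a null set; i.e., every sub-tiling set is contained (modulo null sets) in a tiling set. -/
open MeasureTheory

/-- `Q` is a measurable cross section (fundamental domain of representatives) for the
cosets of the subgroup `Λ` in `G`: `Q` is measurable and meets each coset of `Λ`
in exactly one point. -/
def IsCrossSection {G : Type*} [CommGroup G] [MeasurableSpace G]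
    (Λ : Subgroup G) (Q : Set G) : Prop :=
  MeasurableSet Q ∧ ∀ g : G, ∃! q, q ∈ Q ∧ g * q⁻¹ ∈ Λ

/-- If `(Ω, Λ)` is a sub-tiling pair (a.e. disjoint `Λ`-translates),
then `Ω` is contained, modulo a `μ`-null set, in some measurable cross section of
`G/Λ`; i.e. every sub-tiling set is contained (mod null sets) in a tiling set. -/
theorem subtiling_subset_cross_section
    {G : Type*} [CommGroup G] [TopologicalSpace G] [IsTopologicalGroup G]
    [T2Space G] [LocallyCompactSpace G] [SecondCountableTopology G]
    [MeasurableSpace G] [BorelSpace G]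
    (μ : Measure G) [μ.IsHaarMeasure]
    (Λ : Subgroup G) [DiscreteTopology Λ] [CompactSpace (G ⧸ Λ)] [Countable Λ]
    (Ω : Set G) (hΩmeas : MeasurableSet Ω) (hΩpos : 0 < μ Ω) (hΩfin : μ Ω < ⊤)
    (hsub : ∀ l ∈ Λ, l ≠ 1 → μ (Ω ∩ ((· * l) '' Ω)) = 0) :
    ∃ Q : Set G, IsCrossSection Λ Q ∧ μ (Ω \ Q) = 0 := by
  classical
  -- the `Λ`-saturation of a set
  set sat : Set G → Set G := fun S => ⋃ l : Λ, (· * (l : G)⁻¹) ⁻¹' S with hsatdef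
  have mem_sat : ∀ {S : Set G} {x : G}, x ∈ sat S ↔ ∃ l : Λ, x * (l : G)⁻¹ ∈ S := by
    intro S x
    simp [hsatdef, Set.mem_iUnion]
  have sat_meas : ∀ {S : Set G}, MeasurableSet S → MeasurableSet (sat S) := by
    intro S hS
    exact MeasurableSet.iUnion fun l => hS.preimage (measurable_mul_const _)
  -- Step 1 : remove a null set from Ω so that its translates are genuinely disjoint
  set N : Set G := ⋃ l : Λ, if (l : G) = 1 then ∅ else Ω ∩ ((· * (l : G)) '' Ω) with hNdef
  have hNnull : μ N = 0 := by
    refine measure_iUnion_null fun l => ?_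
    by_cases h : (l : G) = 1
    · simp [h]
    · simp only [h, if_false]
      exact hsub (l : G) l.2 h
  have hNmeas : MeasurableSet N := by
    refine MeasurableSet.iUnion fun l => ?_
    by_cases h : (l : G) = 1
    · simp [h]
    · simp only [h, if_false]
      rw [Set.image_mul_right]
      exact hΩmeas.inter (hΩmeas.preimage (measurable_mul_const _))
  set Ω' : Set G := Ω \ N with hΩ'def
  have hΩ'meas : MeasurableSet Ω' := hΩmeas.diff hNmeas
  have hΩ'uniq : ∀ x ∈ Ω', ∀ y ∈ Ω', y * x⁻¹ ∈ Λ → y = x := by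
    intro x hx y hy hl
    by_contra hne
    have hne1 : y * x⁻¹ ≠ 1 := fun h => hne (by rwa [mul_inv_eq_one] at h)
    have hyN : y ∈ N := by
      refine Set.mem_iUnion.mpr ⟨⟨y * x⁻¹, hl⟩, ?_⟩
      simp only [hne1, if_false]
      refine ⟨hy.1, ⟨x, hx.1, ?_⟩⟩
      show x * (y * x⁻¹) = y
      rw [mul_comm y x⁻¹, mul_inv_cancel_left]
    exact hy.2 hyN
  -- Step 2 : a small symmetric open neighborhood of 1 meeting each coset at most once
  obtain ⟨U, hUopen, hUeq⟩ : ∃ U : Set G, IsOpen U ∧ Subtype.val ⁻¹' U = ({1} : Set Λ) := by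
    have h : IsOpen ({1} : Set Λ) := isOpen_discrete _
    rwa [isOpen_induced_iff] at h
  have hU1 : (1 : G) ∈ U := by
    have h1 : (1 : Λ) ∈ Subtype.val ⁻¹' U := by rw [hUeq]; rfl
    exact h1
  have hUonly : ∀ l : Λ, (l : G) ∈ U → (l : G) = 1 := by
    intro l hl
    have h1 : l ∈ Subtype.val ⁻¹' U := hl
    rw [hUeq] at h1
    exact congrArg Subtype.val h1
  obtain ⟨V, hVopen, hV1, hVmul⟩ := exists_open_nhds_one_mul_subset (hUopen.mem_nhds hU1)
  set V' : Set G := V ∩ V⁻¹ with hV'def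
  have hV'open : IsOpen V' := hVopen.inter hVopen.inv
  have hV'1 : (1 : G) ∈ V' := ⟨hV1, by simpa using hV1⟩
  have hV'uniq : ∀ v ∈ V', ∀ w ∈ V', v * w⁻¹ ∈ Λ → v = w := by
    intro v hv w hw hvw
    have hmem : v * w⁻¹ ∈ U := hVmul (Set.mul_mem_mul hv.1 (Set.mem_inv.mp hw.2))
    have h1 : ((⟨v * w⁻¹, hvw⟩ : Λ) : G) = 1 := hUonly ⟨v * w⁻¹, hvw⟩ hmem
    rwa [mul_inv_eq_one] at h1
  -- Step 3 : a countable cover of G by translates of V'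
  have hGcover : (⋃ g : G, (g * ·) '' V') = Set.univ := by
    ext x
    simp only [Set.mem_iUnion, Set.mem_univ, iff_true]
    exact ⟨x, 1, hV'1, mul_one x⟩
  obtain ⟨t, htc, htU⟩ := TopologicalSpace.isOpen_iUnion_countable
    (fun g : G => (g * ·) '' V') (fun g => (isOpenMap_mul_left g) V' hV'open)
  have htne : t.Nonempty := by
    have h1 : (1 : G) ∈ ⋃ g ∈ t, (g * ·) '' V' := by rw [htU, hGcover]; trivial
    obtain ⟨g, hg, -⟩ := Set.mem_iUnion₂.mp h1
    exact ⟨g, hg⟩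
  obtain ⟨f, hf⟩ := Set.Countable.exists_eq_range htc htne
  set W : ℕ → Set G := fun n => (f n * ·) '' V' with hWdef
  have hWmeas : ∀ n, MeasurableSet (W n) :=
    fun n => ((isOpenMap_mul_left (f n)) V' hV'open).measurableSet
  have hWcover : ∀ x : G, ∃ n, x ∈ W n := by
    intro x
    have hx : x ∈ ⋃ g ∈ t, (g * ·) '' V' := by rw [htU, hGcover]; trivial
    obtain ⟨g, hg, hxg⟩ := Set.mem_iUnion₂.mp hx
    rw [hf] at hg
    obtain ⟨n, rfl⟩ := hg
    exact ⟨n, hxg⟩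
  have hWuniq : ∀ n, ∀ x ∈ W n, ∀ y ∈ W n, x * y⁻¹ ∈ Λ → x = y := by
    rintro n x ⟨v, hv, rfl⟩ y ⟨w, hw, rfl⟩ hxy
    have hxy' : (f n * v) * (f n * w)⁻¹ ∈ Λ := hxy
    have hred : (f n * v) * (f n * w)⁻¹ = v * w⁻¹ := by
      rw [← div_eq_mul_inv, ← div_eq_mul_inv, mul_div_mul_left_eq_div]
    rw [hred] at hxy'
    have := hV'uniq v hv w hw hxy'
    show f n * v = f n * w
    rw [this]
  -- Step 4 : a measurable cross section F
  set B : ℕ → Set G := fun n => ⋃ m, ⋃ _ : m < n, W m with hBdef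
  have hBmeas : ∀ n, MeasurableSet (B n) :=
    fun n => MeasurableSet.iUnion fun m => MeasurableSet.iUnion fun _ => hWmeas m
  set F : Set G := ⋃ n, (W n \ sat (B n)) with hFdef
  have hFmeas : MeasurableSet F :=
    MeasurableSet.iUnion fun n => (hWmeas n).diff (sat_meas (hBmeas n))
  have hFex : ∀ g : G, ∃ q, q ∈ F ∧ g * q⁻¹ ∈ Λ := by
    intro g
    have hP : ∃ n, ∃ q ∈ W n, g * q⁻¹ ∈ Λ := by
      obtain ⟨n, hn⟩ := hWcover g
      exact ⟨n, g, hn, by simp [Λ.one_mem]⟩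
    obtain ⟨q, hqW, hgq⟩ := Nat.find_spec hP
    refine ⟨q, Set.mem_iUnion.mpr ⟨Nat.find hP, hqW, ?_⟩, hgq⟩
    intro hmem
    obtain ⟨l, hl⟩ := mem_sat.mp hmem
    obtain ⟨m, hm⟩ := Set.mem_iUnion.mp hl
    obtain ⟨hmlt, hql⟩ := Set.mem_iUnion.mp hm
    refine Nat.find_min hP hmlt ⟨q * (l : G)⁻¹, hql, ?_⟩
    have heq : g * (q * (l : G)⁻¹)⁻¹ = (g * q⁻¹) * l := by
      simp [mul_inv_rev, mul_comm, mul_assoc, mul_left_comm]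
    rw [heq]
    exact Λ.mul_mem hgq l.2
  have hFuniq : ∀ q ∈ F, ∀ q' ∈ F, q * q'⁻¹ ∈ Λ → q = q' := by
    intro q hq q' hq' hl
    obtain ⟨n, hqn⟩ := Set.mem_iUnion.mp hq
    obtain ⟨m, hq'm⟩ := Set.mem_iUnion.mp hq'
    rcases lt_trichotomy n m with h | h | h
    · exfalso
      apply hq'm.2
      refine mem_sat.mpr ⟨⟨(q * q'⁻¹)⁻¹, Λ.inv_mem hl⟩, ?_⟩
      have heq : q' * (((q * q'⁻¹)⁻¹ : G))⁻¹ = q := by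
        rw [inv_inv, mul_comm, inv_mul_cancel_right]
      rw [heq]
      exact Set.mem_iUnion.mpr ⟨n, Set.mem_iUnion.mpr ⟨h, hqn.1⟩⟩
    · subst h
      exact hWuniq n q hqn.1 q' hq'm.1 hl
    · exfalso
      apply hqn.2
      refine mem_sat.mpr ⟨⟨q * q'⁻¹, hl⟩, ?_⟩
      have heq : q * ((q * q'⁻¹ : G))⁻¹ = q' := by
        rw [mul_inv_rev, inv_inv, mul_comm q' q⁻¹, mul_inv_cancel_left]
      rw [heq]
      exact Set.mem_iUnion.mpr ⟨m, Set.mem_iUnion.mpr ⟨h, hq'm.1⟩⟩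
  -- Step 5 : the final cross section
  refine ⟨Ω' ∪ (F \ sat Ω'), ⟨hΩ'meas.union (hFmeas.diff (sat_meas hΩ'meas)), ?_⟩, ?_⟩
  · intro g
    by_cases h : ∃ w ∈ Ω', g * w⁻¹ ∈ Λ
    · obtain ⟨w, hw, hgw⟩ := h
      refine ⟨w, ⟨Or.inl hw, hgw⟩, ?_⟩
      rintro q ⟨hqQ, hgq⟩
      have hqw : q * w⁻¹ ∈ Λ := by
        have heq : (g * q⁻¹)⁻¹ * (g * w⁻¹) = q * w⁻¹ := by
          have h1 : (g * q⁻¹)⁻¹ * (g * w⁻¹) = (g * w⁻¹) * (g * q⁻¹)⁻¹ := mul_comm _ _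
          rw [h1, ← div_eq_mul_inv, mul_div_mul_left_eq_div, div_eq_mul_inv, inv_inv, mul_comm]
        rw [← heq]
        exact Λ.mul_mem (Λ.inv_mem hgq) hgw
      rcases hqQ with hq | ⟨hqF, hqns⟩
      · exact hΩ'uniq w hw q hq hqw
      · exfalso
        apply hqns
        refine mem_sat.mpr ⟨⟨q * w⁻¹, hqw⟩, ?_⟩
        have heq : q * ((q * w⁻¹ : G))⁻¹ = w := by
          rw [mul_inv_rev, inv_inv, mul_comm w q⁻¹, mul_inv_cancel_left]
        rw [heq]
        exact hw
    · obtain ⟨q, hqF, hgq⟩ := hFex g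
      have hqns : q ∉ sat Ω' := by
        intro hmem
        obtain ⟨l, hl⟩ := mem_sat.mp hmem
        apply h
        refine ⟨q * (l : G)⁻¹, hl, ?_⟩
        have heq : g * (q * (l : G)⁻¹)⁻¹ = (g * q⁻¹) * l := by
          simp [mul_inv_rev, mul_comm, mul_assoc, mul_left_comm]
        rw [heq]
        exact Λ.mul_mem hgq l.2
      refine ⟨q, ⟨Or.inr ⟨hqF, hqns⟩, hgq⟩, ?_⟩
      rintro q' ⟨hq'Q, hgq'⟩
      rcases hq'Q with hq' | ⟨hq'F, -⟩
      · exact absurd ⟨q', hq', hgq'⟩ h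
      · refine hFuniq q' hq'F q hqF ?_
        have heq : (g * q'⁻¹)⁻¹ * (g * q⁻¹) = q' * q⁻¹ := by
          have h1 : (g * q'⁻¹)⁻¹ * (g * q⁻¹) = (g * q⁻¹) * (g * q'⁻¹)⁻¹ := mul_comm _ _
          rw [h1, ← div_eq_mul_inv, mul_div_mul_left_eq_div, div_eq_mul_inv, inv_inv, mul_comm]
        rw [← heq]
        exact Λ.mul_mem (Λ.inv_mem hgq') hgq
  · refine measure_mono_null ?_ hNnull
    rintro x ⟨hxΩ, hxQ⟩
    by_contra hxN
    exact hxQ (Or.inl ⟨hxΩ, hxN⟩)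
end

section
/- Let G be a countable discrete abelian group, π a dual integrable unitary representation of G on a Hilbert space H with bracket map [·,·]_π, and φ ∈ H. Then the orbit {π(g)φ : g ∈ G} is an orthonormal system in H if and only if [φ, φ]_π(χ) = 1 for almost every χ ∈ Ĝ. -/
open MeasureTheory
open scoped ComplexConjugate InnerProductSpace ENNReal

noncomputable def ratAddCircleHom : AddCircle (1 : ℚ) →+ AddCircle (1 : ℝ) :=
  QuotientAddGroup.lift (AddSubgroup.zmultiples (1 : ℚ))
    ((QuotientAddGroup.mk' (AddSubgroup.zmultiples (1 : ℝ))).comp (Rat.castHom ℝ).toAddMonoidHom)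
    (by
      intro x hx
      obtain ⟨k, hk⟩ := AddSubgroup.mem_zmultiples_iff.mp hx
      rw [AddMonoidHom.mem_ker, AddMonoidHom.comp_apply, QuotientAddGroup.mk'_apply,
        QuotientAddGroup.eq_zero_iff]
      refine AddSubgroup.mem_zmultiples_iff.mpr ⟨k, ?_⟩
      rw [← hk]; push_cast; simp)

lemma ratAddCircleHom_injective : Function.Injective ratAddCircleHom := by
  rw [injective_iff_map_eq_zero]
  intro a ha
  induction a using QuotientAddGroup.induction_on with
  | H x =>
    rw [ratAddCircleHom] at ha
    simp only [QuotientAddGroup.lift_mk', AddMonoidHom.comp_apply,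
      RingHom.toAddMonoidHom_eq_coe, AddMonoidHom.coe_coe, QuotientAddGroup.mk'_apply] at ha
    rw [QuotientAddGroup.eq_zero_iff] at ha ⊢
    obtain ⟨k, hk⟩ := AddSubgroup.mem_zmultiples_iff.mp ha
    refine AddSubgroup.mem_zmultiples_iff.mpr ⟨k, ?_⟩
    have : ((k • (1:ℚ) : ℚ) : ℝ) = k • (1:ℝ) := by push_cast; simp
    apply Rat.cast_injective (α := ℝ)
    rw [this, hk]; simp

lemma exists_pontryaginDual_apply_ne_one {G : Type*} [CommGroup G] [TopologicalSpace G]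
    [DiscreteTopology G] {g : G} (hg : g ≠ 1) :
    ∃ χ : PontryaginDual G, χ g ≠ 1 := by
  obtain ⟨c, hc⟩ := CharacterModule.exists_character_apply_ne_zero_of_ne_zero
    (A := Additive G) (a := Additive.ofMul g) (by simpa using hg)
  refine ⟨⟨⟨⟨fun x => AddCircle.toCircle (ratAddCircleHom (c (Additive.ofMul x))), ?_⟩, ?_⟩,
    continuous_of_discreteTopology⟩, ?_⟩
  · simp
  · intro a b
    simp [ofMul_mul, map_add, AddCircle.toCircle_add]
  · intro h
    apply hc
    apply ratAddCircleHom_injective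
    rw [map_zero]
    apply AddCircle.injective_toCircle one_ne_zero
    rw [show AddCircle.toCircle (ratAddCircleHom (c (Additive.ofMul g))) = 1 from h]
    simp [AddCircle.toCircle_zero]

lemma equicontinuous_of_discreteTopology' {ι X α : Type*} [TopologicalSpace X]
    [DiscreteTopology X] [UniformSpace α] (F : ι → X → α) : Equicontinuous F := by
  intro x U hU
  rw [nhds_discrete]
  exact Filter.eventually_pure.mpr fun i => refl_mem_uniformity hU

lemma compactSpace_pontryaginDual {G : Type*} [CommGroup G] [TopologicalSpace G]
    [DiscreteTopology G] : CompactSpace (PontryaginDual G) := by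
  set e : PontryaginDual G → C(G, Circle) := ContinuousMonoidHom.toContinuousMap
  have he : Topology.IsEmbedding e := ContinuousMonoidHom.isEmbedding_toContinuousMap G Circle
  have hS : IsCompact (Set.range e) := by
    apply ArzelaAscoli.isCompact_of_equicontinuous
    · have : ContinuousMap.toFun '' Set.range e
          = {f : G → Circle | ∀ a b : G, f (a * b) = f a * f b} := by
        ext f
        constructor
        · rintro ⟨u, ⟨χ, rfl⟩, rfl⟩ a b
          exact map_mul χ a b
        · intro hf
          have h1 : f 1 = 1 := by
            have := hf 1 1
            rw [one_mul] at this
            exact (left_eq_mul.mp this)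
          exact ⟨ContinuousMap.mk f continuous_of_discreteTopology,
            ⟨⟨⟨⟨f, h1⟩, hf⟩, continuous_of_discreteTopology⟩, rfl⟩, rfl⟩
      rw [this]
      have hclosed : IsClosed {f : G → Circle | ∀ a b : G, f (a * b) = f a * f b} := by
        have : {f : G → Circle | ∀ a b : G, f (a * b) = f a * f b}
            = ⋂ (a : G) (b : G), {f : G → Circle | f (a * b) = f a * f b} := by
          ext f; simp
        rw [this]
        exact isClosed_iInter fun a => isClosed_iInter fun b =>
          isClosed_eq (continuous_apply _) ((continuous_apply a).mul (continuous_apply b))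
      exact hclosed.isCompact
    · exact equicontinuous_of_discreteTopology' _
  have : CompactSpace (Set.range e) := isCompact_iff_compactSpace.mp hS
  exact he.toHomeomorph.symm.compactSpace

open scoped Classical in
lemma integral_char {G : Type*} [CommGroup G] [TopologicalSpace G] [DiscreteTopology G]
    [MeasurableSpace (PontryaginDual G)] [BorelSpace (PontryaginDual G)]
    (ν : Measure (PontryaginDual G)) [ν.IsMulLeftInvariant] [IsProbabilityMeasure ν] (g : G) :
    ∫ χ : PontryaginDual G, (χ g : ℂ) ∂ν = if g = 1 then 1 else 0 := by
  by_cases hg : g = 1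
  · subst hg
    simp [map_one]
  · rw [if_neg hg]
    obtain ⟨χ₀, hχ₀⟩ := exists_pontryaginDual_apply_ne_one hg
    have key : ∫ χ : PontryaginDual G, ((χ₀ * χ) g : ℂ) ∂ν
        = ∫ χ : PontryaginDual G, (χ g : ℂ) ∂ν :=
      integral_mul_left_eq_self (fun χ : PontryaginDual G => (χ g : ℂ)) χ₀
    have hmul : ∀ χ : PontryaginDual G, ((χ₀ * χ) g : ℂ) = (χ₀ g : ℂ) * (χ g : ℂ) := by
      intro χ; norm_cast
    simp_rw [hmul, integral_const_mul] at key
    have hne : (χ₀ g : ℂ) ≠ 1 := by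
      intro h; exact hχ₀ (by ext; exact h)
    by_contra hI
    have := sub_eq_zero.mpr key
    rw [show (χ₀ g : ℂ) * ∫ (a : PontryaginDual G), ((a g : ℂ)) ∂ν
        - ∫ (a : PontryaginDual G), ((a g : ℂ)) ∂ν
        = ((χ₀ g : ℂ) - 1) * ∫ (a : PontryaginDual G), ((a g : ℂ)) ∂ν by ring] at this
    rcases mul_eq_zero.mp this with h | h
    · exact hne (by linear_combination h)
    · exact hI h

lemma ae_eq_zero_of_forall_integral_char_eq_zero {G : Type*} [CommGroup G] [TopologicalSpace G]
    [DiscreteTopology G] [MeasurableSpace (PontryaginDual G)] [BorelSpace (PontryaginDual G)]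
    (ν : Measure (PontryaginDual G)) [ν.IsHaarMeasure] [IsProbabilityMeasure ν]
    (h : PontryaginDual G → ℂ) (hh : Integrable h ν)
    (hzero : ∀ g : G, ∫ χ, h χ * (χ g : ℂ) ∂ν = 0) : h =ᵐ[ν] 0 := by
  haveI : CompactSpace (PontryaginDual G) := compactSpace_pontryaginDual
  haveI : ν.Regular := inferInstance
  -- the evaluation characters on the dual group
  have evcont : ∀ g : G, Continuous fun χ : PontryaginDual G => (χ g : ℂ) := fun g =>
    continuous_subtype_val.comp
      (ContinuousEvalConst.continuous_eval_const (F := ContinuousMonoidHom G Circle) g)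
  set ev : G →* C(PontryaginDual G, ℂ) :=
    { toFun := fun g => ⟨fun χ => (χ g : ℂ), evcont g⟩
      map_one' := by ext χ; simp
      map_mul' := by intro a b; ext χ; simp } with hev
  -- the pairing against `h` as a continuous linear functional
  have hint : ∀ u : C(PontryaginDual G, ℂ), Integrable (fun χ => h χ * u χ) ν := by
    intro u
    have := hh.bdd_mul (u.continuous.aestronglyMeasurable)
      (Filter.Eventually.of_forall fun χ => u.norm_coe_le_norm χ)
    simpa [mul_comm] using this
  set T₀ : C(PontryaginDual G, ℂ) →ₗ[ℂ] ℂ :=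
    { toFun := fun u => ∫ χ, h χ * u χ ∂ν
      map_add' := by
        intro u v
        simp only [ContinuousMap.add_apply, mul_add]
        exact integral_add (hint u) (hint v)
      map_smul' := by
        intro c u
        simp only [ContinuousMap.smul_apply, smul_eq_mul, RingHom.id_apply]
        rw [← integral_const_mul]
        congr 1; ext χ; ring } with hT₀
  have hbound : ∀ u : C(PontryaginDual G, ℂ), ‖T₀ u‖ ≤ (∫ χ, ‖h χ‖ ∂ν) * ‖u‖ := by
    intro u
    refine (norm_integral_le_integral_norm _).trans ?_
    rw [← integral_mul_const]
    refine integral_mono (hint u).norm (hh.norm.mul_const ‖u‖) fun χ => ?_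
    rw [norm_mul]
    exact mul_le_mul_of_nonneg_left (u.norm_coe_le_norm χ) (norm_nonneg _)
  set T : C(PontryaginDual G, ℂ) →L[ℂ] ℂ := T₀.mkContinuous _ hbound with hT
  -- T vanishes on all continuous functions, by Stone-Weierstrass
  have hTzero : ∀ u : C(PontryaginDual G, ℂ), T u = 0 := by
    have hker : (Set.range ev : Set C(PontryaginDual G, ℂ)) ⊆ (LinearMap.ker T.toLinearMap : Set C(PontryaginDual G, ℂ)) := by
      rintro _ ⟨g, rfl⟩
      simp only [SetLike.mem_coe, LinearMap.mem_ker]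
      exact hzero g
    have hstar : ∀ g : G, star (ev g) = ev g⁻¹ := by
      intro g
      ext χ
      simp only [ContinuousMap.star_apply, hev, MonoidHom.coe_mk, OneHom.coe_mk,
        ContinuousMap.coe_mk, map_inv]
      rw [RCLike.star_def, ← Circle.coe_inv_eq_conj, ← map_inv]
    have hstar_set : star (Set.range ev) = Set.range ev := by
      ext u
      simp only [Set.mem_star, Set.mem_range]
      constructor
      · rintro ⟨g, hg⟩
        refine ⟨g⁻¹, ?_⟩
        rw [← hstar g]
        rw [hg, star_star]
      · rintro ⟨g, rfl⟩
        refine ⟨g⁻¹, ?_⟩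
        rw [← hstar g]
    have hsubmonoid : (Submonoid.closure (Set.range ev) : Set C(PontryaginDual G, ℂ)) = Set.range ev := by
      rw [← MonoidHom.coe_mrange, Submonoid.closure_eq]
    -- the star subalgebra generated by characters
    set S : StarSubalgebra ℂ C(PontryaginDual G, ℂ) := StarAlgebra.adjoin ℂ (Set.range ev) with hS
    have hSsep : S.SeparatesPoints := by
      intro χ₁ χ₂ hne
      obtain ⟨g, hg⟩ : ∃ g : G, χ₁ g ≠ χ₂ g := by
        by_contra hcon
        push_neg at hcon
        exact hne (DFunLike.ext _ _ hcon)
      exact ⟨_, ⟨ev g, StarAlgebra.subset_adjoin ℂ _ ⟨g, rfl⟩, rfl⟩,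
        fun hc => hg (Subtype.coe_injective hc)⟩
    have hdense : S.topologicalClosure = ⊤ :=
      ContinuousMap.starSubalgebra_topologicalClosure_eq_top_of_separatesPoints S hSsep
    have hSM : (S : Set C(PontryaginDual G, ℂ)) ⊆ (Submodule.span ℂ (Set.range ev) : Set C(PontryaginDual G, ℂ)) := by
      intro u hu
      have : u ∈ Subalgebra.toSubmodule (StarAlgebra.adjoin ℂ (Set.range ev)).toSubalgebra := hu
      rw [StarAlgebra.adjoin_eq_span, hstar_set, Set.union_self, hsubmonoid] at this
      exact this
    have hMker : (Submodule.span ℂ (Set.range ev) : Set C(PontryaginDual G, ℂ))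
        ⊆ (LinearMap.ker T.toLinearMap : Set C(PontryaginDual G, ℂ)) :=
      Submodule.span_le.mpr hker
    intro u
    have humem : u ∈ closure (LinearMap.ker T.toLinearMap : Set C(PontryaginDual G, ℂ)) := by
      have h1 : u ∈ closure (S : Set C(PontryaginDual G, ℂ)) := by
        rw [← StarSubalgebra.topologicalClosure_coe, hdense]
        trivial
      exact closure_mono (hSM.trans hMker) h1
    have hclosed : IsClosed (LinearMap.ker T.toLinearMap : Set C(PontryaginDual G, ℂ)) :=
      (isClosed_singleton (x := (0 : ℂ))).preimage T.continuous
    rw [hclosed.closure_eq] at humem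
    exact LinearMap.mem_ker.mp humem
  -- conclude via integrals over closed sets
  apply ae_eq_zero_of_forall_setIntegral_isClosed_eq_zero hh
  intro s hs
  have hmeas : MeasurableSet s := hs.measurableSet
  have key : ∀ n : ℕ, ∃ f : PontryaginDual G → ℂ, Continuous f ∧
      eLpNorm (fun x => f x - s.indicator (fun _ => (1:ℂ)) x) 1 ν ≤ (n : ℝ≥0∞)⁻¹ ∧
      ∀ x, ‖f x‖ ≤ 1 := by
    intro n
    obtain ⟨f, hf_cont, hf_norm, hf_bd, -, -⟩ :=
      exists_continuous_eLpNorm_sub_le_of_closed (μ := ν) (p := 1) ENNReal.one_ne_top hs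
        isOpen_univ (Set.subset_univ s) (measure_ne_top ν s) (1:ℂ)
        (ENNReal.inv_ne_zero.mpr (ENNReal.natCast_ne_top n))
    exact ⟨f, hf_cont, hf_norm, by simpa using hf_bd⟩
  choose f hca hcb hcc using key
  have hg_meas : AEStronglyMeasurable (s.indicator (fun _ => (1:ℂ))) ν :=
    (aestronglyMeasurable_indicator_iff hmeas).mpr aestronglyMeasurable_const
  have htim : TendstoInMeasure ν f Filter.atTop (s.indicator fun _ => (1:ℂ)) := by
    apply tendstoInMeasure_of_tendsto_eLpNorm (p := 1) one_ne_zero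
      (fun n => (hca n).aestronglyMeasurable) hg_meas
    refine tendsto_of_tendsto_of_tendsto_of_le_of_le tendsto_const_nhds
      ENNReal.tendsto_inv_nat_nhds_zero (fun n => zero_le) (fun n => ?_)
    exact hcb n
  obtain ⟨ns, -, hae⟩ := htim.exists_seq_tendsto_ae
  have hlim : Filter.Tendsto (fun i => ∫ χ, h χ * f (ns i) χ ∂ν) Filter.atTop
      (nhds (∫ χ, h χ * s.indicator (fun _ => (1:ℂ)) χ ∂ν)) := by
    apply tendsto_integral_of_dominated_convergence (fun χ => ‖h χ‖)
    · exact fun i => hh.aestronglyMeasurable.mul (hca (ns i)).aestronglyMeasurable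
    · exact hh.norm
    · intro i
      refine Filter.Eventually.of_forall fun χ => ?_
      rw [norm_mul]
      calc ‖h χ‖ * ‖f (ns i) χ‖ ≤ ‖h χ‖ * 1 :=
            mul_le_mul_of_nonneg_left (hcc (ns i) χ) (norm_nonneg _)
        _ = ‖h χ‖ := mul_one _
    · filter_upwards [hae] with χ hχ
      exact tendsto_const_nhds.mul hχ
  have hz : ∀ i, ∫ χ, h χ * f (ns i) χ ∂ν = 0 := fun i => hTzero ⟨f (ns i), hca (ns i)⟩
  simp_rw [hz] at hlim
  have hkey : ∫ χ, h χ * s.indicator (fun _ => (1:ℂ)) χ ∂ν = 0 :=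
    tendsto_nhds_unique hlim tendsto_const_nhds
  have heq : (fun χ => h χ * s.indicator (fun _ => (1:ℂ)) χ) = s.indicator h := by
    funext χ
    by_cases hχ : χ ∈ s
    · simp [Set.indicator_of_mem hχ]
    · simp [Set.indicator_of_notMem hχ]
  rw [heq] at hkey
  rw [← integral_indicator hmeas]
  exact hkey

/-- Let `G` be a countable discrete abelian group, `π` a dual integrable
unitary representation of `G` on a Hilbert space `H` with bracket map `[·,·]_π` taking
values in `L¹(Ĝ)` (where the compact dual `Ĝ` carries normalized Haar measure `ν`), and
`φ ∈ H`. Then the orbit `{π(g)φ : g ∈ G}` is orthonormal iff `[φ,φ]_π = 1` a.e. on `Ĝ`. -/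
theorem orbit_orthonormal_iff_bracket_ae_one
    {G : Type*} [CommGroup G] [TopologicalSpace G] [DiscreteTopology G] [Countable G]
    {H : Type*} [NormedAddCommGroup H] [InnerProductSpace ℂ H] [CompleteSpace H]
    [MeasurableSpace (PontryaginDual G)] [BorelSpace (PontryaginDual G)]
    (ν : Measure (PontryaginDual G)) [ν.IsHaarMeasure] [IsProbabilityMeasure ν]
    (π : G →* (H ≃ₗᵢ[ℂ] H))
    (br : H → H → PontryaginDual G → ℂ)
    (hbr_int : ∀ x y : H, Integrable (br x y) ν)
    -- dual integrability: `⟨x, π(g) y⟩ = ∫_{Ĝ} [x,y]_π(χ) conj(χ(g)) dχ`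
    -- (the inner product being linear in the first entry)
    (hbr : ∀ (g : G) (x y : H),
      ⟪π g y, x⟫_ℂ = ∫ χ, br x y χ * conj ((χ g : ℂ)) ∂ν)
    (φ : H) :
    Orthonormal ℂ (fun g : G => π g φ) ↔ (∀ᵐ χ ∂ν, br φ φ χ = 1) := by
  classical
  have happly : ∀ (a b : G) (v : H), π a (π b v) = π (a * b) v := by
    intro a b v
    rw [map_mul, LinearIsometryEquiv.coe_mul]
    rfl
  have hconj : ∀ (k : G) (χ : PontryaginDual G), conj ((χ k : ℂ)) = ((χ k⁻¹ : Circle) : ℂ) := by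
    intro k χ
    rw [map_inv, ← Circle.coe_inv_eq_conj]
  have key : ∀ g h : G,
      ⟪π g φ, π h φ⟫_ℂ = ∫ χ, br φ φ χ * conj ((χ (h⁻¹ * g) : ℂ)) ∂ν := by
    intro g h
    have h1 : ⟪π g φ, π h φ⟫_ℂ = ⟪π (h⁻¹ * g) φ, φ⟫_ℂ := by
      rw [← (π h⁻¹).inner_map_map (π g φ) (π h φ), happly, happly, inv_mul_cancel, map_one]
      rfl
    rw [h1, hbr]
  -- the integral of the character against the a.e.-one function
  have hchar_int : ∀ k : G, Integrable (fun χ : PontryaginDual G => (χ k : ℂ)) ν := by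
    intro k
    have hcont : Continuous fun χ : PontryaginDual G => (χ k : ℂ) :=
      continuous_subtype_val.comp
        (ContinuousEvalConst.continuous_eval_const (F := ContinuousMonoidHom G Circle) k)
    have := (integrable_const (1 : ℂ) (μ := ν)).bdd_mul hcont.aestronglyMeasurable (c := 1)
      (Filter.Eventually.of_forall fun χ => (Circle.norm_coe (χ k)).le)
    simpa using this
  constructor
  · -- orthonormal implies a.e. equal to one
    intro hON
    have horto : ∀ k : G, ∫ χ, br φ φ χ * conj ((χ k : ℂ)) ∂ν = if k = 1 then 1 else 0 := by
      intro k
      have h0 := (orthonormal_iff_ite.mp hON) k 1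
      rw [key k 1] at h0
      simpa using h0
    have hint_mul : ∀ k : G, Integrable (fun χ => br φ φ χ * (χ k : ℂ)) ν := by
      intro k
      have hcont : Continuous fun χ : PontryaginDual G => (χ k : ℂ) :=
        continuous_subtype_val.comp
          (ContinuousEvalConst.continuous_eval_const (F := ContinuousMonoidHom G Circle) k)
      have := (hbr_int φ φ).bdd_mul hcont.aestronglyMeasurable (c := 1) (Filter.Eventually.of_forall fun χ => (Circle.norm_coe (χ k)).le)
      simpa [mul_comm] using this
    have hz : ∀ g : G, ∫ χ, (br φ φ χ - 1) * (χ g : ℂ) ∂ν = 0 := by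
      intro g
      have h₁ := horto g⁻¹
      simp_rw [hconj g⁻¹, inv_inv] at h₁
      have h₂ : ∫ χ : PontryaginDual G, (χ g : ℂ) ∂ν = if g⁻¹ = 1 then 1 else 0 := by
        rw [integral_char]
        congr 1
        simp [inv_eq_one]
      have hsub : ∀ χ : PontryaginDual G,
          (br φ φ χ - 1) * (χ g : ℂ) = br φ φ χ * (χ g : ℂ) - (χ g : ℂ) := by
        intro χ; ring
      simp_rw [hsub]
      rw [integral_sub (hint_mul g) (hchar_int g), h₁, h₂, sub_self]
    have hfin := ae_eq_zero_of_forall_integral_char_eq_zero ν (fun χ => br φ φ χ - 1)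
      ((hbr_int φ φ).sub (integrable_const 1)) hz
    filter_upwards [hfin] with χ hχ
    exact sub_eq_zero.mp hχ
  · -- a.e. equal to one implies orthonormal
    intro hae
    rw [orthonormal_iff_ite]
    intro g h
    rw [key g h]
    have hcongr : ∫ χ, br φ φ χ * conj ((χ (h⁻¹ * g) : ℂ)) ∂ν
        = ∫ χ, ((χ (h⁻¹ * g)⁻¹ : Circle) : ℂ) ∂ν := by
      refine integral_congr_ae ?_
      filter_upwards [hae] with χ hχ
      rw [hχ, one_mul, hconj]
    rw [hcongr, integral_char]
    by_cases hgh : g = h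
    · simp [hgh]
    · rw [if_neg hgh, if_neg]
      intro hcon
      rw [inv_eq_one, inv_mul_eq_one] at hcon
      exact hgh hcon.symm
end

section
/- Let Λ be a lattice in an LCA group G and Ω a measurable set of finite positive measure that is not a sub-tiling set for Λ. Then there exists a nonzero f ∈ L²(Ω) with ⟨f, e_{λ̃}⟩_{L²(Ω)} = 0 for every λ̃ ∈ Λ⊥; consequently the exponential system {e_{λ̃} : λ̃ ∈ Λ⊥} is not a frame for L²(Ω). -/
open MeasureTheory
open scoped ComplexConjugate


open scoped Pointwise

/-- The annihilator (dual lattice) `Λ⊥` of a subgroup `Λ`: all continuous characters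
of `G` that are trivial on `Λ`. -/
def dualLattice (G : Type*) [CommGroup G] [TopologicalSpace G] [IsTopologicalGroup G]
    (Λ : Subgroup G) : Subgroup (PontryaginDual G) where
  carrier := {χ : PontryaginDual G | ∀ l ∈ Λ, χ l = 1}
  one_mem' := by intro l _; rfl
  mul_mem' := by
    intro χ ψ hχ hψ l hl
    show χ l * ψ l = 1
    rw [hχ l hl, hψ l hl, mul_one]
  inv_mem' := by
    intro χ hχ l hl
    show (χ l)⁻¹ = 1
    rw [hχ l hl, inv_one]

/-- If `Ω` (finite positive measure) is not a sub-tiling set for the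
lattice `Λ`, then there is a nonzero `f ∈ L²(Ω)` orthogonal to every exponential
`e_{λ̃}`, `λ̃ ∈ Λ⊥`; consequently `{e_{λ̃} : λ̃ ∈ Λ⊥}` is not a frame for `L²(Ω)`. -/
theorem not_subtiling_exponentials_not_frame
    {G : Type*} [CommGroup G] [TopologicalSpace G] [IsTopologicalGroup G]
    [T2Space G] [LocallyCompactSpace G] [SecondCountableTopology G]
    [MeasurableSpace G] [BorelSpace G]
    (μ : Measure G) [μ.IsHaarMeasure]
    (Λ : Subgroup G) [DiscreteTopology Λ] [CompactSpace (G ⧸ Λ)] [Countable Λ]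
    (Ω : Set G) (hΩmeas : MeasurableSet Ω) (hΩpos : 0 < μ Ω) (hΩfin : μ Ω < ⊤)
    (hnotsub : ¬ ∀ l ∈ Λ, l ≠ 1 → μ (Ω ∩ ((· * l) '' Ω)) = 0) :
    (∃ f : G → ℂ, MemLp f 2 (μ.restrict Ω) ∧ ¬ f =ᵐ[μ.restrict Ω] 0 ∧
        ∀ k : dualLattice G Λ,
          ∫ g in Ω, f g * conj (((k : PontryaginDual G) g : ℂ)) ∂μ = 0) ∧
      ¬ ∃ A B : ℝ, 0 < A ∧
        ∀ f : G → ℂ, MemLp f 2 (μ.restrict Ω) →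
          A * ∫ g in Ω, ‖f g‖ ^ 2 ∂μ ≤
              (∑' k : dualLattice G Λ,
                ‖∫ g in Ω, f g * conj (((k : PontryaginDual G) g : ℂ)) ∂μ‖ ^ 2) ∧
            (∑' k : dualLattice G Λ,
                ‖∫ g in Ω, f g * conj (((k : PontryaginDual G) g : ℂ)) ∂μ‖ ^ 2) ≤
              B * ∫ g in Ω, ‖f g‖ ^ 2 ∂μ := by
  push_neg at hnotsub
  obtain ⟨l, hlΛ, hl1, hlpos⟩ := hnotsub
  -- separate 1 from l
  obtain ⟨V, W, hVo, hWo, h1V, hlW, hVW⟩ := t2_separation (Ne.symm hl1)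
  set U : Set G := V ∩ (fun x => x * l) ⁻¹' W with hUdef
  have hUo : IsOpen U := hVo.inter (hWo.preimage (continuous_mul_right l))
  have h1U : (1 : G) ∈ U := ⟨h1V, by simpa using hlW⟩
  -- the overlap set S
  set S : Set G := Ω ∩ ((· * l) '' Ω) with hSdef
  have hSim : (· * l) '' Ω = (· * l⁻¹) ⁻¹' Ω := by
    ext x
    constructor
    · rintro ⟨y, hy, rfl⟩; simpa using hy
    · intro hx; exact ⟨x * l⁻¹, hx, by simp⟩
  have hSmeas : MeasurableSet S := by
    rw [hSdef, hSim]
    exact hΩmeas.inter (hΩmeas.preimage (measurable_mul_const l⁻¹))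
  -- cover by translates of U
  obtain ⟨D, hDc, hDd⟩ := TopologicalSpace.exists_countable_dense G
  have hcover : S ⊆ ⋃ d ∈ D, S ∩ d • U := by
    intro x hx
    have hne : (x • U⁻¹).Nonempty := ⟨x * 1⁻¹, Set.mem_smul_set.2 ⟨1⁻¹, by simpa using h1U, rfl⟩⟩
    obtain ⟨d, hdD, hdm⟩ := hDd.exists_mem_open (hUo.inv.smul x) hne
    obtain ⟨u, hu, hdu⟩ := Set.mem_smul_set.1 hdm
    refine Set.mem_biUnion hdD ⟨hx, Set.mem_smul_set.2 ⟨u⁻¹, hu, ?_⟩⟩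
    have : d = x * u := hdu.symm
    subst this
    simp [smul_eq_mul, mul_assoc]
  obtain ⟨d, hdD, hdpos⟩ : ∃ d ∈ D, μ (S ∩ d • U) ≠ 0 := by
    by_contra h
    push_neg at h
    exact hlpos (measure_mono_null hcover ((measure_biUnion_null_iff hDc).2 h))
  -- the two pieces
  set Ω₁ : Set G := S ∩ d • U with hΩ₁def
  set Ω₂ : Set G := (· * l) ⁻¹' Ω₁ with hΩ₂def
  have hΩ₁meas : MeasurableSet Ω₁ := hSmeas.inter (hUo.smul d).measurableSet
  have hΩ₂meas : MeasurableSet Ω₂ := hΩ₁meas.preimage (measurable_mul_const l)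
  have hΩ₁Ω : Ω₁ ⊆ Ω := fun x hx => hx.1.1
  have hΩ₂Ω : Ω₂ ⊆ Ω := by
    intro x hx
    have hx' : x * l ∈ Ω₁ := hx
    obtain ⟨y, hy, hyl⟩ := hx'.1.2
    have : y = x := mul_right_cancel hyl
    exact this ▸ hy
  have hdisj : Disjoint Ω₁ Ω₂ := by
    rw [Set.disjoint_left]
    rintro x ⟨-, hxU⟩ hx2
    obtain ⟨-, hxlU⟩ := (hx2 : x * l ∈ Ω₁)
    obtain ⟨u, hu, hdu⟩ := Set.mem_smul_set.1 hxU
    obtain ⟨v, hv, hdv⟩ := Set.mem_smul_set.1 hxlU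
    have huv : v = u * l := by
      rw [smul_eq_mul] at hdu hdv
      have h' : d * v = d * (u * l) := by rw [← mul_assoc, hdu]; exact hdv
      exact mul_left_cancel h'
    exact Set.disjoint_left.1 hVW hv.1 (huv ▸ hu.2)
  have hmp : MeasurePreserving (· * l) μ μ := measurePreserving_mul_right μ l
  have hΩ₂eq : μ Ω₂ = μ Ω₁ := hmp.measure_preimage hΩ₁meas.nullMeasurableSet
  have hΩ₁fin : μ Ω₁ < ⊤ := lt_of_le_of_lt (measure_mono hΩ₁Ω) hΩfin
  have hΩ₂fin : μ Ω₂ < ⊤ := hΩ₂eq ▸ hΩ₁fin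
  have hΩ₁pos : 0 < μ Ω₁ := pos_iff_ne_zero.2 hdpos
  -- the function
  set f : G → ℂ := fun g => Ω₁.indicator (fun _ => (1 : ℂ)) g - Ω₂.indicator (fun _ => (1 : ℂ)) g
    with hfdef
  have hmem : MemLp f 2 μ :=
    (memLp_indicator_const 2 hΩ₁meas (1 : ℂ) (Or.inr hΩ₁fin.ne)).sub
      (memLp_indicator_const 2 hΩ₂meas (1 : ℂ) (Or.inr hΩ₂fin.ne))
  have hmemΩ : MemLp f 2 (μ.restrict Ω) := hmem.restrict Ω
  -- nonvanishing
  have hfΩ₁ : ∀ x ∈ Ω₁, f x = 1 := by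
    intro x hx
    have hx2 : x ∉ Ω₂ := Set.disjoint_left.1 hdisj hx
    simp [hfdef, Set.indicator_of_mem hx, Set.indicator_of_notMem hx2]
  have hfne : ¬ f =ᵐ[μ.restrict Ω] 0 := by
    intro h
    have hnull : μ.restrict Ω {x | f x ≠ 0} = 0 := by
      have := h
      rw [Filter.EventuallyEq, ae_iff] at this
      simpa using this
    have hsub : Ω₁ ⊆ {x | f x ≠ 0} := fun x hx => by simp [hfΩ₁ x hx]
    have hle := measure_mono_null hsub hnull
    rw [Measure.restrict_apply' hΩmeas] at hle
    rw [Set.inter_eq_self_of_subset_left hΩ₁Ω] at hle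
    exact hΩ₁pos.ne' hle
  -- orthogonality
  have hkey : ∀ k : dualLattice G Λ,
      ∫ g in Ω, f g * conj (((k : PontryaginDual G) g : ℂ)) ∂μ = 0 := by
    intro k
    set χ : G → ℂ := fun g => conj (((k : PontryaginDual G) g : ℂ)) with hχdef
    have hχcont : Continuous χ :=
      Complex.continuous_conj.comp (continuous_subtype_val.comp
        (k : PontryaginDual G).continuous)
    have hχl : ∀ x, χ (x * l) = χ x := by
      intro x
      have hk : ((k : PontryaginDual G) l) = 1 := k.2 l hlΛ
      simp [hχdef, map_mul, hk]
    have hbound : ∀ x, ‖χ x‖ ≤ 1 := by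
      intro x
      simp [hχdef, Circle.norm_coe]
    have hint : ∀ T : Set G, μ T < ⊤ → IntegrableOn χ T μ := by
      intro T hT
      exact Integrable.mono' (integrableOn_const hT.ne)
        hχcont.aestronglyMeasurable.restrict
        (Filter.Eventually.of_forall hbound)
    have hpt : ∀ g, f g * χ g = Ω₁.indicator χ g - Ω₂.indicator χ g := by
      intro g
      by_cases h1 : g ∈ Ω₁ <;> by_cases h2 : g ∈ Ω₂ <;>
        simp [hfdef, Set.indicator_of_mem, Set.indicator_of_notMem, h1, h2] <;> ring
    have hi1 : Integrable (Ω₁.indicator χ) (μ.restrict Ω) :=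
      (((hint Ω₁ hΩ₁fin).integrable_indicator hΩ₁meas)).restrict
    have hi2 : Integrable (Ω₂.indicator χ) (μ.restrict Ω) :=
      (((hint Ω₂ hΩ₂fin).integrable_indicator hΩ₂meas)).restrict
    calc ∫ g in Ω, f g * χ g ∂μ
        = ∫ g in Ω, (Ω₁.indicator χ g - Ω₂.indicator χ g) ∂μ := by
          exact integral_congr_ae (Filter.Eventually.of_forall fun g => hpt g)
      _ = (∫ g in Ω, Ω₁.indicator χ g ∂μ) - ∫ g in Ω, Ω₂.indicator χ g ∂μ :=
          integral_sub hi1 hi2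
      _ = (∫ g in Ω₁, χ g ∂μ) - ∫ g in Ω₂, χ g ∂μ := by
          rw [setIntegral_indicator hΩ₁meas, setIntegral_indicator hΩ₂meas,
            Set.inter_eq_self_of_subset_right hΩ₁Ω, Set.inter_eq_self_of_subset_right hΩ₂Ω]
      _ = 0 := by
          have := hmp.setIntegral_preimage_emb
            (MeasurableEquiv.mulRight l).measurableEmbedding χ Ω₁
          have h2 : ∫ g in Ω₂, χ g ∂μ = ∫ g in Ω₁, χ g ∂μ := by
            rw [hΩ₂def, ← this]
            exact integral_congr_ae (Filter.Eventually.of_forall fun x => (hχl x).symm)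
          rw [h2, sub_self]
  refine ⟨⟨f, hmemΩ, hfne, hkey⟩, ?_⟩
  rintro ⟨A, B, hA, hAB⟩
  obtain ⟨h1, -⟩ := hAB f hmemΩ
  have htsum : (∑' k : dualLattice G Λ,
      ‖∫ g in Ω, f g * conj (((k : PontryaginDual G) g : ℂ)) ∂μ‖ ^ 2) = 0 := by
    have : ∀ k : dualLattice G Λ,
        ‖∫ g in Ω, f g * conj (((k : PontryaginDual G) g : ℂ)) ∂μ‖ ^ 2 = 0 := by
      intro k; rw [hkey k]; simp
    exact (tsum_congr this).trans tsum_zero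
  rw [htsum] at h1
  -- compute the L² norm of f
  have hptnorm : ∀ g, ‖f g‖ ^ 2 = (Ω₁ ∪ Ω₂).indicator (fun _ => (1 : ℝ)) g := by
    intro g
    by_cases h1' : g ∈ Ω₁
    · have h2' : g ∉ Ω₂ := Set.disjoint_left.1 hdisj h1'
      simp [hfdef, Set.indicator_of_mem, Set.indicator_of_notMem, h1', h2',
        Set.mem_union]
    · by_cases h2' : g ∈ Ω₂
      · simp [hfdef, Set.indicator_of_mem, Set.indicator_of_notMem, h1', h2',
          Set.mem_union]
      · simp [hfdef, Set.indicator_of_notMem, h1', h2', Set.mem_union]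
  have hI : ∫ g in Ω, ‖f g‖ ^ 2 ∂μ = (μ (Ω₁ ∪ Ω₂)).toReal := by
    calc ∫ g in Ω, ‖f g‖ ^ 2 ∂μ
        = ∫ g in Ω, (Ω₁ ∪ Ω₂).indicator (fun _ => (1 : ℝ)) g ∂μ :=
          integral_congr_ae (Filter.Eventually.of_forall fun g => hptnorm g)
      _ = ∫ _ in Ω ∩ (Ω₁ ∪ Ω₂), (1 : ℝ) ∂μ :=
          setIntegral_indicator (hΩ₁meas.union hΩ₂meas)
      _ = (μ (Ω₁ ∪ Ω₂)).toReal := by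
          rw [Set.inter_eq_self_of_subset_right (Set.union_subset hΩ₁Ω hΩ₂Ω)]
          simp [setIntegral_const, Measure.real]
  have hIpos : 0 < ∫ g in Ω, ‖f g‖ ^ 2 ∂μ := by
    rw [hI]
    refine ENNReal.toReal_pos ?_ ?_
    · exact fun h => hΩ₁pos.ne' (le_antisymm (h ▸ measure_mono Set.subset_union_left) bot_le)
    · exact (lt_of_le_of_lt (measure_mono (Set.union_subset hΩ₁Ω hΩ₂Ω)) hΩfin).ne
  nlinarith [mul_pos hA hIpos]
end

section
/- Let Λ be a lattice in an LCA group G and Ω a measurable set with 0 < |Ω| < ∞. Suppose there exists ψ ∈ L²(Ω) with 0 < A ≤ |ψ|² ≤ B < ∞ a.e. on Ω such that the modulates {M_{λ̃}ψ : λ̃ ∈ Λ⊥} form a frame for L²(Ω). Then the exponential system {e_{λ̃} : λ̃ ∈ Λ⊥} is itself a frame for L²(Ω), and hence (Ω, Λ) is a sub-tiling pair. -/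
open MeasureTheory
open scoped ComplexConjugate


open scoped Pointwise

/-- Let `Λ` be a lattice in an LCA group `G` and `Ω` measurable with
`0 < |Ω| < ∞`. Suppose some `ψ ∈ L²(Ω)` with `0 < A ≤ |ψ|² ≤ B < ∞` a.e. on `Ω` is such
that the modulates `{M_{λ̃}ψ : λ̃ ∈ Λ⊥}` form a frame for `L²(Ω)`. Then the exponentials
`{e_{λ̃} : λ̃ ∈ Λ⊥}` form a frame for `L²(Ω)`, and `(Ω, Λ)` is a sub-tiling pair. -/
theorem modulates_frame_implies_exponentials_frame_and_subtiling
    {G : Type*} [CommGroup G] [TopologicalSpace G] [IsTopologicalGroup G]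
    [T2Space G] [LocallyCompactSpace G] [SecondCountableTopology G]
    [MeasurableSpace G] [BorelSpace G]
    (μ : Measure G) [μ.IsHaarMeasure]
    (Λ : Subgroup G) [DiscreteTopology Λ] [CompactSpace (G ⧸ Λ)] [Countable Λ]
    (Ω : Set G) (hΩmeas : MeasurableSet Ω) (hΩpos : 0 < μ Ω) (hΩfin : μ Ω < ⊤)
    (ψ : G → ℂ) (hψ : MemLp ψ 2 (μ.restrict Ω))
    (A B : ℝ) (hA : 0 < A)
    (hbounds : ∀ᵐ g ∂(μ.restrict Ω), A ≤ ‖ψ g‖ ^ 2 ∧ ‖ψ g‖ ^ 2 ≤ B)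
    (hframe : ∃ A' B' : ℝ, 0 < A' ∧
      ∀ f : G → ℂ, MemLp f 2 (μ.restrict Ω) →
        A' * ∫ g in Ω, ‖f g‖ ^ 2 ∂μ ≤
            (∑' k : dualLattice G Λ,
              ‖∫ g in Ω, f g * conj (((k : PontryaginDual G) g : ℂ) * ψ g) ∂μ‖ ^ 2) ∧
          (∑' k : dualLattice G Λ,
              ‖∫ g in Ω, f g * conj (((k : PontryaginDual G) g : ℂ) * ψ g) ∂μ‖ ^ 2) ≤
            B' * ∫ g in Ω, ‖f g‖ ^ 2 ∂μ) :
    (∃ C D : ℝ, 0 < C ∧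
      ∀ f : G → ℂ, MemLp f 2 (μ.restrict Ω) →
        C * ∫ g in Ω, ‖f g‖ ^ 2 ∂μ ≤
            (∑' k : dualLattice G Λ,
              ‖∫ g in Ω, f g * conj (((k : PontryaginDual G) g : ℂ)) ∂μ‖ ^ 2) ∧
          (∑' k : dualLattice G Λ,
              ‖∫ g in Ω, f g * conj (((k : PontryaginDual G) g : ℂ)) ∂μ‖ ^ 2) ≤
            D * ∫ g in Ω, ‖f g‖ ^ 2 ∂μ) ∧
      (∀ l ∈ Λ, l ≠ 1 → μ (Ω ∩ ((· * l) '' Ω)) = 0) := by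
  haveI : Fact (μ Ω < ⊤) := ⟨hΩfin⟩
  obtain ⟨A', B', hA', hAB⟩ := hframe
  have hres_ne : μ.restrict Ω ≠ 0 := by
    intro h
    have h2 := Measure.restrict_apply_univ (μ := μ) Ω
    rw [h] at h2
    simp only [Measure.coe_zero, Pi.zero_apply] at h2
    exact hΩpos.ne' h2.symm
  haveI : (ae (μ.restrict Ω)).NeBot := ae_neBot.2 hres_ne
  obtain ⟨g₀, hg₀⟩ := hbounds.exists
  have hB : 0 < B := lt_of_lt_of_le hA (le_trans hg₀.1 hg₀.2)
  have hψint : Integrable (fun g => ‖ψ g‖ ^ 2) (μ.restrict Ω) :=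
    (memLp_two_iff_integrable_sq_norm hψ.aestronglyMeasurable).1 hψ
  have hIψ : 0 < ∫ g in Ω, ‖ψ g‖ ^ 2 ∂μ := by
    have h1 : A * (μ Ω).toReal ≤ ∫ g in Ω, ‖ψ g‖ ^ 2 ∂μ := by
      have h2 := integral_mono_ae (integrable_const A) hψint (hbounds.mono fun g hg => hg.1)
      rwa [integral_const, measureReal_restrict_apply_univ, Measure.real, smul_eq_mul, mul_comm] at h2
    have h3 : 0 < A * (μ Ω).toReal :=
      mul_pos hA (ENNReal.toReal_pos hΩpos.ne' hΩfin.ne)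
    linarith
  have hB'pos : 0 < B' := by
    obtain ⟨h1, h2⟩ := hAB ψ hψ
    have h3 : A' * ∫ g in Ω, ‖ψ g‖ ^ 2 ∂μ ≤ B' * ∫ g in Ω, ‖ψ g‖ ^ 2 ∂μ := le_trans h1 h2
    nlinarith
  -- Part 1
  have main : ∀ f : G → ℂ, MemLp f 2 (μ.restrict Ω) →
      A' / B * ∫ g in Ω, ‖f g‖ ^ 2 ∂μ ≤
          (∑' k : dualLattice G Λ,
            ‖∫ g in Ω, f g * conj (((k : PontryaginDual G) g : ℂ)) ∂μ‖ ^ 2) ∧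
        (∑' k : dualLattice G Λ,
            ‖∫ g in Ω, f g * conj (((k : PontryaginDual G) g : ℂ)) ∂μ‖ ^ 2) ≤
          B' / A * ∫ g in Ω, ‖f g‖ ^ 2 ∂μ := by
    intro f hf
    set f₀ : G → ℂ := fun g => f g / conj (ψ g) with hf₀def
    have hmeas₀ : AEStronglyMeasurable f₀ (μ.restrict Ω) := by
      have hc : AEMeasurable (fun g => conj (ψ g)) (μ.restrict Ω) :=
        Complex.continuous_conj.measurable.comp_aemeasurable
          hψ.aestronglyMeasurable.aemeasurable
      exact (hf.aestronglyMeasurable.aemeasurable.div hc).aestronglyMeasurable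
    have hsA : 0 < Real.sqrt A := Real.sqrt_pos.2 hA
    have hptwise : ∀ᵐ g ∂(μ.restrict Ω),
        ψ g ≠ 0 ∧ ‖f₀ g‖ = ‖f g‖ / ‖ψ g‖ ∧ Real.sqrt A ≤ ‖ψ g‖ ∧ ‖ψ g‖ ^ 2 ≤ B := by
      filter_upwards [hbounds] with g hg
      have hne : ψ g ≠ 0 := by
        intro h; rw [h] at hg; simp at hg; linarith [hg.1]
      refine ⟨hne, ?_, ?_, hg.2⟩
      · rw [hf₀def]; simp [norm_div, RCLike.norm_conj]
      · have := Real.sqrt_le_sqrt hg.1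
        rwa [Real.sqrt_sq (norm_nonneg _)] at this
    have hmem₀ : MemLp f₀ 2 (μ.restrict Ω) := by
      refine MemLp.of_le_mul (c := (Real.sqrt A)⁻¹) hf hmeas₀ ?_
      filter_upwards [hptwise] with g hg
      rw [hg.2.1]
      have h1 : ‖f g‖ / ‖ψ g‖ ≤ ‖f g‖ / Real.sqrt A :=
        div_le_div_of_nonneg_left (norm_nonneg _) hsA hg.2.2.1
      calc ‖f g‖ / ‖ψ g‖ ≤ ‖f g‖ / Real.sqrt A := h1
        _ = (Real.sqrt A)⁻¹ * ‖f g‖ := by rw [div_eq_inv_mul]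
    have hfint2 : Integrable (fun g => ‖f g‖ ^ 2) (μ.restrict Ω) :=
      (memLp_two_iff_integrable_sq_norm hf.aestronglyMeasurable).1 hf
    have hf0int2 : Integrable (fun g => ‖f₀ g‖ ^ 2) (μ.restrict Ω) :=
      (memLp_two_iff_integrable_sq_norm hmeas₀).1 hmem₀
    have hnormsq : ∀ᵐ g ∂(μ.restrict Ω), ‖f g‖ ^ 2 = ‖f₀ g‖ ^ 2 * ‖ψ g‖ ^ 2 := by
      filter_upwards [hptwise] with g hg
      rw [hg.2.1, div_pow, div_mul_cancel₀]
      exact pow_ne_zero _ (norm_ne_zero_iff.2 hg.1)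
    have hIle : ∫ g in Ω, ‖f g‖ ^ 2 ∂μ ≤ B * ∫ g in Ω, ‖f₀ g‖ ^ 2 ∂μ := by
      rw [← integral_const_mul]
      refine integral_mono_ae hfint2 (hf0int2.const_mul B) ?_
      filter_upwards [hptwise, hnormsq] with g hg hsq
      rw [hsq]
      calc ‖f₀ g‖ ^ 2 * ‖ψ g‖ ^ 2 ≤ ‖f₀ g‖ ^ 2 * B :=
            mul_le_mul_of_nonneg_left hg.2.2.2 (sq_nonneg _)
        _ = B * ‖f₀ g‖ ^ 2 := mul_comm _ _
    have hIge : A * ∫ g in Ω, ‖f₀ g‖ ^ 2 ∂μ ≤ ∫ g in Ω, ‖f g‖ ^ 2 ∂μ := by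
      rw [← integral_const_mul]
      refine integral_mono_ae (hf0int2.const_mul A) hfint2 ?_
      filter_upwards [hptwise, hnormsq] with g hg hsq
      rw [hsq]
      have hAle : A ≤ ‖ψ g‖ ^ 2 := by
        have := Real.sq_sqrt hA.le
        nlinarith [hg.2.2.1, Real.sqrt_nonneg A, norm_nonneg (ψ g)]
      calc A * ‖f₀ g‖ ^ 2 = ‖f₀ g‖ ^ 2 * A := mul_comm _ _
        _ ≤ ‖f₀ g‖ ^ 2 * ‖ψ g‖ ^ 2 := mul_le_mul_of_nonneg_left hAle (sq_nonneg _)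
    have hco : (∑' k : dualLattice G Λ,
        ‖∫ g in Ω, f₀ g * conj (((k : PontryaginDual G) g : ℂ) * ψ g) ∂μ‖ ^ 2) =
        (∑' k : dualLattice G Λ,
        ‖∫ g in Ω, f g * conj (((k : PontryaginDual G) g : ℂ)) ∂μ‖ ^ 2) := by
      refine tsum_congr fun k => ?_
      have heq : (∫ g in Ω, f₀ g * conj (((k : PontryaginDual G) g : ℂ) * ψ g) ∂μ) =
          ∫ g in Ω, f g * conj (((k : PontryaginDual G) g : ℂ)) ∂μ := by
        refine integral_congr_ae ?_
        filter_upwards [hptwise] with g hg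
        have hne : conj (ψ g) ≠ 0 := by
          simpa using hg.1
        rw [map_mul]
        rw [hf₀def]
        field_simp
      rw [heq]
    obtain ⟨h1, h2⟩ := hAB f₀ hmem₀
    rw [hco] at h1 h2
    constructor
    · calc A' / B * ∫ g in Ω, ‖f g‖ ^ 2 ∂μ
          ≤ A' / B * (B * ∫ g in Ω, ‖f₀ g‖ ^ 2 ∂μ) :=
            mul_le_mul_of_nonneg_left hIle (div_nonneg hA'.le hB.le)
        _ = A' * ∫ g in Ω, ‖f₀ g‖ ^ 2 ∂μ := by rw [← mul_assoc, div_mul_cancel₀ _ hB.ne']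
        _ ≤ _ := h1
    · calc (∑' k : dualLattice G Λ,
            ‖∫ g in Ω, f g * conj (((k : PontryaginDual G) g : ℂ)) ∂μ‖ ^ 2)
          ≤ B' * ∫ g in Ω, ‖f₀ g‖ ^ 2 ∂μ := h2
        _ ≤ B' / A * ∫ g in Ω, ‖f g‖ ^ 2 ∂μ := by
            rw [div_mul_eq_mul_div, le_div_iff₀ hA]
            calc B' * (∫ g in Ω, ‖f₀ g‖ ^ 2 ∂μ) * A
                = B' * (A * ∫ g in Ω, ‖f₀ g‖ ^ 2 ∂μ) := by ring
              _ ≤ B' * ∫ g in Ω, ‖f g‖ ^ 2 ∂μ :=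
                  mul_le_mul_of_nonneg_left hIge hB'pos.le
  refine ⟨⟨A' / B, B' / A, div_pos hA' hB, main⟩, ?_⟩
  -- Part 2
  intro l hlΛ hl1
  by_contra hne0
  set E := Ω ∩ ((· * l) '' Ω) with hE
  have hEmeas : MeasurableSet E := by
    have him : ((· * l) '' Ω) = (· * l⁻¹) ⁻¹' Ω := by
      ext x
      simp only [Set.mem_image, Set.mem_preimage]
      constructor
      · rintro ⟨w, hw, rfl⟩; simpa using hw
      · intro h; exact ⟨x * l⁻¹, h, by simp⟩
    rw [hE, him]
    exact hΩmeas.inter ((measurable_mul_const l⁻¹) hΩmeas)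
  obtain ⟨b, hbc, hbne, hbasis⟩ := TopologicalSpace.exists_countable_basis G
  have key : ∀ U : Set G, IsOpen U → μ ((E ∩ U) \ ((· * l) ⁻¹' (E ∩ U))) = 0 := by
    intro U hU
    set S := E ∩ U with hSdef
    set S' := (· * l) ⁻¹' S with hS'def
    have hSmeas : MeasurableSet S := hEmeas.inter hU.measurableSet
    have hS'meas : MeasurableSet S' := (measurable_mul_const l) hSmeas
    have hSΩ : S ⊆ Ω := fun x hx => hx.1.1
    have hS'Ω : S' ⊆ Ω := by
      intro x hx
      have hx2 : x * l ∈ S := hx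
      obtain ⟨w, hw, hwl⟩ := hx2.1.2
      have : w = x := mul_right_cancel hwl
      rwa [← this]
    set f : G → ℂ := fun x => Set.indicator S 1 x - Set.indicator S' 1 x with hfdef
    have hSfin : (μ.restrict Ω) S ≠ ⊤ := by
      refine (lt_of_le_of_lt ?_ hΩfin).ne
      rw [Measure.restrict_apply hSmeas]
      exact measure_mono Set.inter_subset_right
    have hS'fin : (μ.restrict Ω) S' ≠ ⊤ := by
      refine (lt_of_le_of_lt ?_ hΩfin).ne
      rw [Measure.restrict_apply hS'meas]
      exact measure_mono Set.inter_subset_right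
    have hfmem : MemLp f 2 (μ.restrict Ω) :=
      (memLp_indicator_const 2 hSmeas (1 : ℂ) (Or.inr hSfin)).sub
        (memLp_indicator_const 2 hS'meas (1 : ℂ) (Or.inr hS'fin))
    have hzero : ∀ k : dualLattice G Λ,
        ∫ g in Ω, f g * conj (((k : PontryaginDual G) g : ℂ)) ∂μ = 0 := by
      intro k
      set χ : G → ℂ := fun g => ((k : PontryaginDual G) g : ℂ) with hχdef
      have hχcont : Continuous χ :=
        continuous_induced_dom.comp (map_continuous (k : PontryaginDual G))
      have hχl : χ l = 1 := by
        have := k.2 l hlΛ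
        rw [hχdef]
        simp only
        rw [this]
        rfl
      have hsupp : ∀ x, x ∉ Ω → f x * conj (χ x) = 0 := by
        intro x hx
        have h1 : x ∉ S := fun h => hx (hSΩ h)
        have h2 : x ∉ S' := fun h => hx (hS'Ω h)
        simp [hfdef, Set.indicator_of_notMem h1, Set.indicator_of_notMem h2]
      rw [setIntegral_eq_integral_of_forall_compl_eq_zero hsupp]
      have hrw : (fun x => f x * conj (χ x)) =
          fun x => Set.indicator S (fun y => conj (χ y)) x -
            Set.indicator S' (fun y => conj (χ y)) x := by
        funext x
        by_cases h1 : x ∈ S <;> by_cases h2 : x ∈ S' <;>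
          simp [hfdef, Set.indicator_of_mem, Set.indicator_of_notMem, h1, h2, sub_mul]
      have hintS : IntegrableOn (fun y => conj (χ y)) S μ := by
        have hfin : μ S < ⊤ := lt_of_le_of_lt (measure_mono hSΩ) hΩfin
        haveI : Fact (μ S < ⊤) := ⟨hfin⟩
        refine Integrable.mono' (integrable_const 1) ?_ ?_
        · exact ((Complex.continuous_conj.comp hχcont)).aestronglyMeasurable
        · refine Filter.Eventually.of_forall fun x => ?_
          simp [hχdef, Circle.norm_coe]
      have hintS' : IntegrableOn (fun y => conj (χ y)) S' μ := by
        have hfin : μ S' < ⊤ := lt_of_le_of_lt (measure_mono hS'Ω) hΩfin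
        haveI : Fact (μ S' < ⊤) := ⟨hfin⟩
        refine Integrable.mono' (integrable_const 1) ?_ ?_
        · exact ((Complex.continuous_conj.comp hχcont)).aestronglyMeasurable
        · refine Filter.Eventually.of_forall fun x => ?_
          simp [hχdef, Circle.norm_coe]
      have hint1 : Integrable (Set.indicator S fun y => conj (χ y)) μ :=
        (integrable_indicator_iff hSmeas).2 hintS
      have hint2 : Integrable (Set.indicator S' fun y => conj (χ y)) μ :=
        (integrable_indicator_iff hS'meas).2 hintS'
      have hsub : ∫ x, Set.indicator S (fun y => conj (χ y)) x ∂μ =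
          ∫ x, Set.indicator S' (fun y => conj (χ y)) x ∂μ := by
        have h1 := (integral_mul_right_eq_self (μ := μ)
          (fun x => Set.indicator S (fun y => conj (χ y)) x) l).symm
        rw [h1]
        congr 1
        funext x
        by_cases hx : x * l ∈ S
        · have hx' : x ∈ S' := hx
          rw [Set.indicator_of_mem hx, Set.indicator_of_mem hx']
          have : χ (x * l) = χ x * χ l := by
            rw [hχdef]
            simp only
            rw [map_mul]
            norm_cast
          rw [this, hχl, mul_one]
        · have hx' : x ∉ S' := hx
          rw [Set.indicator_of_notMem hx, Set.indicator_of_notMem hx']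
      rw [hrw, integral_sub hint1 hint2, hsub, sub_self]
    have htsum0 : (∑' k : dualLattice G Λ,
        ‖∫ g in Ω, f g * conj (((k : PontryaginDual G) g : ℂ)) ∂μ‖ ^ 2) = 0 := by
      calc (∑' k : dualLattice G Λ,
          ‖∫ g in Ω, f g * conj (((k : PontryaginDual G) g : ℂ)) ∂μ‖ ^ 2)
          = ∑' _ : dualLattice G Λ, (0 : ℝ) :=
            tsum_congr fun k => by rw [hzero k]; simp
        _ = 0 := tsum_zero
    have hfint2 : Integrable (fun g => ‖f g‖ ^ 2) (μ.restrict Ω) :=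
      (memLp_two_iff_integrable_sq_norm hfmem.aestronglyMeasurable).1 hfmem
    have hIzero : ∫ g in Ω, ‖f g‖ ^ 2 ∂μ = 0 := by
      have hlow := (main f hfmem).1
      rw [htsum0] at hlow
      have hInn : 0 ≤ ∫ g in Ω, ‖f g‖ ^ 2 ∂μ :=
        integral_nonneg fun g => sq_nonneg _
      have hCpos : 0 < A' / B := div_pos hA' hB
      nlinarith
    have hae := (integral_eq_zero_iff_of_nonneg_ae
      (Filter.Eventually.of_forall fun g => sq_nonneg ‖f g‖) hfint2).1 hIzero
    rw [Filter.EventuallyEq, ae_iff] at hae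
    have hnull : μ.restrict Ω (S \ S') = 0 := by
      refine measure_mono_null ?_ hae
      intro x hx
      simp only [Set.mem_setOf_eq, Pi.zero_apply]
      have h1 : f x = 1 := by
        simp [hfdef, Set.indicator_of_mem hx.1, Set.indicator_of_notMem hx.2]
      rw [h1]
      norm_num
    rw [Measure.restrict_apply' hΩmeas,
      Set.inter_eq_self_of_subset_left (fun x hx => hSΩ hx.1)] at hnull
    exact hnull
  -- combine
  set N := ⋃ U ∈ b, ((E ∩ U) \ ((· * l) ⁻¹' (E ∩ U))) with hNdef
  have hNnull : μ N = 0 :=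
    (measure_biUnion_null_iff hbc).2 fun U hU => key U (hbasis.isOpen hU)
  have hENpos : μ (E \ N) ≠ 0 := by
    intro h
    apply hne0
    have h1 : μ E ≤ μ (E \ N) + μ N := by
      refine le_trans (measure_mono ?_) (measure_union_le _ _)
      intro x hx
      by_cases hN : x ∈ N
      · exact Or.inr hN
      · exact Or.inl ⟨hx, hN⟩
    rw [h, hNnull, add_zero] at h1
    exact le_antisymm h1 zero_le
  obtain ⟨x, hxE, hxN⟩ := nonempty_of_measure_ne_zero hENpos
  have hxl : x ≠ x * l := by
    intro h
    exact hl1 (by simpa using (mul_left_cancel ((mul_one x).trans h)).symm)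
  obtain ⟨V, W, hV, hW, hxV, hxlW, hVW⟩ := t2_separation hxl
  obtain ⟨U, hUb, hxU, hUV⟩ := hbasis.exists_subset_of_mem_open hxV hV
  have hxS : x ∈ E ∩ U := ⟨hxE, hxU⟩
  have hxlS : x * l ∈ E ∩ U := by
    by_contra h
    exact hxN (Set.mem_biUnion hUb ⟨hxS, h⟩)
  exact Set.disjoint_left.1 hVW (hUV hxlS.2) hxlW
end
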